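/- Janson's inequality: let z₁, …, z_m be independent random variables taking values in {0,1}, let 𝒮 be a finite family of nonempty subsets of {1,…,m}, for each α ∈ 𝒮 set I_α = ∏_{j ∈ α} z_j, and let Y = ∑_{α ∈ 𝒮} I_α. Write α ∼ β if α ∩ β ≠ ∅, and set Δ = ∑_{(α,β) ∈ 𝒮×𝒮, α ∼ β} E(I_α I_β). Then for every ε > 0, P(Y ≤ (1−ε)·E(Y)) ≤ exp(−(ε·E(Y))² / (2(E(Y) + Δ))). -/

import Mathlib

open Real MeasureTheory ProbabilityTheory
open Finset

namespace JansonAux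

variable {m : ℕ}

/-- Product weight on a coordinate set `u`. -/
noncomputable def wgt (p : Fin m → ℝ) (u A : Finset (Fin m)) : ℝ :=
  ∏ j ∈ u, if j ∈ A then p j else 1 - p j

lemma wgt_nonneg {p : Fin m → ℝ} (hp : ∀ j, 0 ≤ p j ∧ p j ≤ 1) (u A : Finset (Fin m)) :
    0 ≤ wgt p u A := by
  refine Finset.prod_nonneg fun j _ => ?_
  by_cases h : j ∈ A <;> simp [h, (hp j).1, sub_nonneg.2 (hp j).2]

lemma wgt_congr {p : Fin m → ℝ} {u A B : Finset (Fin m)}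
    (h : ∀ j ∈ u, (j ∈ A ↔ j ∈ B)) : wgt p u A = wgt p u B :=
  Finset.prod_congr rfl fun j hj => if_congr (h j hj) rfl rfl

lemma wgt_union {p : Fin m → ℝ} {u v : Finset (Fin m)} (h : Disjoint u v)
    (A : Finset (Fin m)) : wgt p (u ∪ v) A = wgt p u A * wgt p v A :=
  Finset.prod_union h

lemma wgt_sum_powerset (p : Fin m → ℝ) (u : Finset (Fin m)) :
    ∑ A ∈ u.powerset, wgt p u A = 1 := by
  have h1 : ∀ A ∈ u.powerset, wgt p u A = (∏ j ∈ A, p j) * ∏ j ∈ u \ A, (1 - p j) := by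
    intro A hA
    rw [Finset.mem_powerset] at hA
    rw [wgt, Finset.prod_ite]
    congr 1
    · apply Finset.prod_congr _ fun _ _ => rfl
      rw [Finset.filter_mem_eq_inter, Finset.inter_eq_right.2 hA]
    · apply Finset.prod_congr _ fun _ _ => rfl
      ext j; simp [Finset.mem_sdiff, and_comm]
  rw [Finset.sum_congr rfl h1, ← Finset.prod_add]
  simp

lemma wgt_supermodular (p : Fin m → ℝ) (u A B : Finset (Fin m)) :
    wgt p u A * wgt p u B = wgt p u (A ∩ B) * wgt p u (A ∪ B) := by
  rw [wgt, wgt, wgt, wgt, ← Finset.prod_mul_distrib, ← Finset.prod_mul_distrib]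
  refine Finset.prod_congr rfl fun j _ => ?_
  by_cases hA : j ∈ A <;> by_cases hB : j ∈ B <;>
    simp [hA, hB, Finset.mem_inter, Finset.mem_union, mul_comm]

lemma sum_split (p : Fin m → ℝ) (u : Finset (Fin m)) (F : Finset (Fin m) → ℝ) :
    ∑ S : Finset (Fin m), wgt p Finset.univ S * F S
      = ∑ A ∈ u.powerset, ∑ B ∈ uᶜ.powerset,
          wgt p u A * wgt p uᶜ B * F (A ∪ B) := by
  rw [← Finset.sum_product']
  refine Finset.sum_bij' (fun S _ => (S ∩ u, S \ u)) (fun AB _ => AB.1 ∪ AB.2) ?_ ?_ ?_ ?_ ?_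
  · intro S _
    simp only [Finset.mem_product, Finset.mem_powerset]
    constructor
    · exact Finset.inter_subset_right
    · intro j hj
      rw [Finset.mem_sdiff] at hj
      simpa using hj.2
  · intro AB _; exact Finset.mem_univ _
  · intro S _
    ext j; simp only [Finset.mem_union, Finset.mem_inter, Finset.mem_sdiff]; tauto
  · intro AB hAB
    simp only [Finset.mem_product, Finset.mem_powerset] at hAB
    obtain ⟨h1, h2⟩ := hAB
    have h3 : ∀ j ∈ AB.2, j ∉ u := fun j hj => by simpa using h2 hj
    ext j
    · simp only [Finset.mem_inter, Finset.mem_union]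
      constructor
      · rintro ⟨h | h, hu⟩
        · exact h
        · exact absurd hu (h3 j h)
      · intro h; exact ⟨Or.inl h, h1 h⟩
    · simp only [Finset.mem_sdiff, Finset.mem_union]
      constructor
      · rintro ⟨h | h, hu⟩
        · exact absurd (h1 h) hu
        · exact h
      · intro h; exact ⟨Or.inr h, h3 j h⟩
  · intro S _
    have huniv : (Finset.univ : Finset (Fin m)) = u ∪ uᶜ := by simp
    rw [huniv, wgt_union disjoint_compl_right]
    have h1 : wgt p u S = wgt p u (S ∩ u) :=
      wgt_congr fun j hj => by simp [Finset.mem_inter, hj]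
    have h2 : wgt p uᶜ S = wgt p uᶜ (S \ u) :=
      wgt_congr fun j hj => by simp [Finset.mem_sdiff, Finset.mem_compl.1 hj]
    have h3 : (S ∩ u) ∪ (S \ u) = S := by
      ext j; simp only [Finset.mem_union, Finset.mem_inter, Finset.mem_sdiff]; tauto
    rw [h1, h2, h3]

lemma sum_wgt_one (p : Fin m → ℝ) :
    ∑ S : Finset (Fin m), wgt p Finset.univ S = 1 := by
  rw [← Finset.powerset_univ]
  exact wgt_sum_powerset p Finset.univ

lemma sum_factor (p : Fin m → ℝ) (u : Finset (Fin m)) (f g : Finset (Fin m) → ℝ)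
    (hf : ∀ A B, A ⊆ u → B ⊆ uᶜ → f (A ∪ B) = f A)
    (hg : ∀ A B, A ⊆ u → B ⊆ uᶜ → g (A ∪ B) = g B) :
    ∑ S : Finset (Fin m), wgt p Finset.univ S * (f S * g S)
      = (∑ S : Finset (Fin m), wgt p Finset.univ S * f S)
        * ∑ S : Finset (Fin m), wgt p Finset.univ S * g S := by
  rw [sum_split p u (fun S => f S * g S), sum_split p u f, sum_split p u g]
  have e1 : ∀ A ∈ u.powerset, ∀ B ∈ uᶜ.powerset,
      wgt p u A * wgt p uᶜ B * (f (A ∪ B) * g (A ∪ B))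
        = (wgt p u A * f A) * (wgt p uᶜ B * g B) := by
    intro A hA B hB
    rw [Finset.mem_powerset] at hA hB
    rw [hf A B hA hB, hg A B hA hB]; ring
  have e2 : ∀ A ∈ u.powerset, ∀ B ∈ uᶜ.powerset,
      wgt p u A * wgt p uᶜ B * f (A ∪ B) = (wgt p u A * f A) * wgt p uᶜ B := by
    intro A hA B hB
    rw [Finset.mem_powerset] at hA hB
    rw [hf A B hA hB]; ring
  have e3 : ∀ A ∈ u.powerset, ∀ B ∈ uᶜ.powerset,
      wgt p u A * wgt p uᶜ B * g (A ∪ B) = wgt p u A * (wgt p uᶜ B * g B) := by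
    intro A hA B hB
    rw [Finset.mem_powerset] at hA hB
    rw [hg A B hA hB]; ring
  rw [Finset.sum_congr rfl fun A hA => Finset.sum_congr rfl fun B hB => e1 A hA B hB,
      Finset.sum_congr rfl fun A hA => Finset.sum_congr rfl fun B hB => e2 A hA B hB,
      Finset.sum_congr rfl fun A hA => Finset.sum_congr rfl fun B hB => e3 A hA B hB]
  rw [← Finset.sum_mul_sum, ← Finset.sum_mul_sum, ← Finset.sum_mul_sum,
    wgt_sum_powerset p uᶜ, wgt_sum_powerset p u]
  ring

/-- FKG inequality for two antitone functions. -/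
lemma fkg_antitone (μ f g : Finset (Fin m) → ℝ) (hμ0 : 0 ≤ μ) (hf0 : 0 ≤ f) (hg0 : 0 ≤ g)
    (hf : Antitone f) (hg : Antitone g)
    (hμ : ∀ a b, μ a * μ b ≤ μ (a ∩ b) * μ (a ∪ b)) :
    (∑ a : Finset (Fin m), μ a * f a) * ∑ a : Finset (Fin m), μ a * g a
      ≤ (∑ a : Finset (Fin m), μ a) * ∑ a : Finset (Fin m), μ a * (f a * g a) := by
  have key := fkg (μ := fun S : Finset (Fin m) => μ Sᶜ) (f := fun S => f Sᶜ) (g := fun S => g Sᶜ)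
    (fun S => hμ0 Sᶜ) (fun S => hf0 Sᶜ) (fun S => hg0 Sᶜ)
    (fun a b hab => hf (Finset.compl_subset_compl.2 hab))
    (fun a b hab => hg (Finset.compl_subset_compl.2 hab))
    (fun a b => by
      have h := hμ aᶜ bᶜ
      have e1 : aᶜ ∩ bᶜ = (a ⊔ b)ᶜ := by simp [Finset.compl_union]
      have e2 : aᶜ ∪ bᶜ = (a ⊓ b)ᶜ := by simp [Finset.compl_inter]
      rw [e1, e2] at h
      calc μ aᶜ * μ bᶜ ≤ μ (a ⊔ b)ᶜ * μ (a ⊓ b)ᶜ := h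
        _ = μ (a ⊓ b)ᶜ * μ (a ⊔ b)ᶜ := mul_comm _ _)
  have e : ∀ h : Finset (Fin m) → ℝ, ∑ a : Finset (Fin m), h aᶜ = ∑ a : Finset (Fin m), h a := by
    intro h
    exact Fintype.sum_equiv (Function.Involutive.toPerm _ (fun S : Finset (Fin m) => compl_compl S))
      _ _ (fun a => rfl)
  simpa only [e (fun a => μ a * f a), e (fun a => μ a * g a), e μ,
    e (fun a => μ a * (f a * g a))] using key

/-- Finite Jensen for `exp` via the tangent line at the mean. -/
lemma jensen_exp {ι : Type*} (s : Finset ι) (v x : ι → ℝ) (hv : ∀ i ∈ s, 0 ≤ v i)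
    (hpos : 0 < ∑ i ∈ s, v i) :
    (∑ i ∈ s, v i) * Real.exp ((∑ i ∈ s, v i * x i) / (∑ i ∈ s, v i))
      ≤ ∑ i ∈ s, v i * Real.exp (x i) := by
  set T := ∑ i ∈ s, v i with hT
  set c := (∑ i ∈ s, v i * x i) / T with hc
  have hcT : ∑ i ∈ s, v i * x i = c * T := by
    rw [hc]; field_simp
  have key : ∀ i ∈ s, v i * Real.exp c + (v i * x i) * Real.exp c - v i * (c * Real.exp c)
      ≤ v i * Real.exp (x i) := by
    intro i hi
    have h1 : Real.exp c * (1 + (x i - c)) ≤ Real.exp (x i) := by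
      have h2 : 1 + (x i - c) ≤ Real.exp (x i - c) := by
        have := Real.add_one_le_exp (x i - c); linarith
      calc Real.exp c * (1 + (x i - c)) ≤ Real.exp c * Real.exp (x i - c) :=
            mul_le_mul_of_nonneg_left h2 (Real.exp_nonneg c)
        _ = Real.exp (x i) := by rw [← Real.exp_add]; congr 1; ring
    have h3 := mul_le_mul_of_nonneg_left h1 (hv i hi)
    nlinarith [hv i hi]
  have hsum := Finset.sum_le_sum key
  have e1 : ∑ i ∈ s, (v i * Real.exp c + (v i * x i) * Real.exp c - v i * (c * Real.exp c))
      = T * Real.exp c := by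
    rw [Finset.sum_sub_distrib, Finset.sum_add_distrib, ← Finset.sum_mul, ← Finset.sum_mul,
      ← Finset.sum_mul, hcT, ← hT]
    ring
  rw [e1] at hsum
  exact hsum

/-- `exp (-x) ≤ 1 - x + x²/2` for `x ≥ 0`. -/
lemma exp_neg_le_quadratic {x : ℝ} (hx : 0 ≤ x) : Real.exp (-x) ≤ 1 - x + x ^ 2 / 2 := by
  set k : ℝ → ℝ := fun y => 1 - y + y ^ 2 / 2 - Real.exp (-y) with hk
  have hderiv : ∀ y : ℝ, HasDerivAt k (-1 + y + Real.exp (-y)) y := by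
    intro y
    have h1 : HasDerivAt (fun y : ℝ => Real.exp (-y)) (Real.exp (-y) * (-1)) y :=
      (hasDerivAt_neg y).exp
    have h2 : HasDerivAt (fun y : ℝ => 1 - y + y ^ 2 / 2) (0 - 1 + (2 * y ^ 1) / 2) y := by
      exact (((hasDerivAt_const y (1:ℝ)).sub (hasDerivAt_id y)).add
        ((hasDerivAt_pow 2 y).div_const 2))
    have := h2.sub h1
    exact this.congr_deriv (by ring)
  have hdiff : Differentiable ℝ k := fun y => (hderiv y).differentiableAt
  have hmono : Monotone k := by
    apply monotone_of_deriv_nonneg hdiff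
    intro y
    rw [(hderiv y).deriv]
    have := Real.add_one_le_exp (-y)
    linarith
  have h0 : k 0 = 0 := by simp [hk]
  have hkx := hmono hx
  rw [h0] at hkx
  have : 0 ≤ 1 - x + x ^ 2 / 2 - Real.exp (-x) := hkx
  linarith

/-- indicator of `α ⊆ S` -/
def iA (α S : Finset (Fin m)) : ℝ := if α ⊆ S then 1 else 0

lemma iA_nonneg (α S : Finset (Fin m)) : 0 ≤ iA α S := by
  unfold iA; split <;> norm_num

lemma iA_le_one (α S : Finset (Fin m)) : iA α S ≤ 1 := by
  unfold iA; split <;> norm_num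

lemma iA_sq (α S : Finset (Fin m)) : iA α S * iA α S = iA α S := by
  unfold iA; split <;> norm_num

lemma iA_mono (α : Finset (Fin m)) {S T : Finset (Fin m)} (h : S ⊆ T) :
    iA α S ≤ iA α T := by
  unfold iA
  by_cases h1 : α ⊆ S
  · rw [if_pos h1, if_pos (h1.trans h)]
  · rw [if_neg h1]; split <;> norm_num

lemma iA_supermodular (α A B : Finset (Fin m)) :
    iA α A * iA α B = iA α (A ∩ B) * iA α (A ∪ B) := by
  have hi : (α ⊆ A ∩ B) ↔ (α ⊆ A ∧ α ⊆ B) := Finset.subset_inter_iff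
  by_cases h1 : α ⊆ A <;> by_cases h2 : α ⊆ B
  · simp [iA, h1, h2, hi, h1.trans Finset.subset_union_left]
  · simp [iA, h1, h2, hi]
  · simp [iA, h1, h2, hi]
  · simp [iA, h1, h2, hi]

lemma antitone_exp_sum (t : ℝ) (ht : 0 ≤ t) (ℬ : Finset (Finset (Fin m))) :
    Antitone (fun S => Real.exp (-(t * ∑ β ∈ ℬ, iA β S))) := by
  intro S T hST
  simp only
  rw [Real.exp_le_exp, neg_le_neg_iff]
  exact mul_le_mul_of_nonneg_left
    (Finset.sum_le_sum fun β _ => iA_mono β hST) ht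

lemma stepA (p : Fin m → ℝ) (hp : ∀ j, 0 ≤ p j ∧ p j ≤ 1)
    (t : ℝ) (ht : 0 ≤ t) (𝒮 : Finset (Finset (Fin m))) (α : Finset (Fin m)) :
    (∑ S : Finset (Fin m), (wgt p Finset.univ S * iA α S) *
        Real.exp (-(t * ∑ β ∈ 𝒮.filter (fun β => (α ∩ β).Nonempty), iA β S)))
      * (∑ S : Finset (Fin m), wgt p Finset.univ S * Real.exp (-(t * ∑ β ∈ 𝒮, iA β S)))
      ≤ ∑ S : Finset (Fin m), (wgt p Finset.univ S * iA α S) *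
          Real.exp (-(t * ∑ β ∈ 𝒮, iA β S)) := by
  classical
  set w := wgt p Finset.univ with hw
  set μt : Finset (Fin m) → ℝ := fun S => w S * iA α S with hμt
  set Yα : Finset (Fin m) → ℝ :=
    fun S => ∑ β ∈ 𝒮.filter (fun β => (α ∩ β).Nonempty), iA β S with hYα
  set Zα : Finset (Fin m) → ℝ :=
    fun S => ∑ β ∈ 𝒮.filter (fun β => ¬(α ∩ β).Nonempty), iA β S with hZα
  set YF : Finset (Fin m) → ℝ := fun S => ∑ β ∈ 𝒮, iA β S with hYF
  have hw0 : ∀ S, 0 ≤ w S := fun S => wgt_nonneg hp _ S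
  have hμt0 : ∀ S, 0 ≤ μt S := fun S => mul_nonneg (hw0 S) (iA_nonneg _ _)
  have hYZ : ∀ S, YF S = Yα S + Zα S := by
    intro S
    rw [hYF, hYα, hZα]
    exact (Finset.sum_filter_add_sum_filter_not 𝒮 (fun β => (α ∩ β).Nonempty) _).symm
  have hYα0 : ∀ S, 0 ≤ Yα S := fun S => Finset.sum_nonneg fun β _ => iA_nonneg β S
  set f : Finset (Fin m) → ℝ := fun S => Real.exp (-(t * Yα S)) with hf
  set g : Finset (Fin m) → ℝ := fun S => Real.exp (-(t * Zα S)) with hg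
  have hanti : ∀ ℬ : Finset (Finset (Fin m)),
      Antitone (fun S => Real.exp (-(t * ∑ β ∈ ℬ, iA β S))) :=
    fun ℬ => antitone_exp_sum t ht ℬ
  -- FKG inequality
  have hfkg := fkg_antitone μt f g (fun S => hμt0 S) (fun S => Real.exp_nonneg _)
    (fun S => Real.exp_nonneg _) (hanti _) (hanti _)
    (fun a b => by
      have h1 := wgt_supermodular p Finset.univ a b
      have h2 := iA_supermodular α a b
      simp only [hμt]
      rw [show w a * iA α a * (w b * iA α b) = (w a * w b) * (iA α a * iA α b) by ring,
        h1, h2]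
      ring_nf
      exact le_of_eq (by rw [hw]; ring))
  -- product rewriting
  have hfg : ∀ S, μt S * (f S * g S) = μt S * Real.exp (-(t * YF S)) := by
    intro S
    congr 1
    rw [hf, hg]
    simp only
    rw [← Real.exp_add, hYZ S]
    congr 1
    ring
  -- independence factorisation
  have hfactor : ∑ S : Finset (Fin m), w S * (iA α S * g S)
      = (∑ S : Finset (Fin m), w S * iA α S) * (∑ S : Finset (Fin m), w S * g S) := by
    refine sum_factor p α (iA α) g ?_ ?_
    · intro A B hA hB
      unfold iA
      refine if_congr ?_ rfl rfl
      constructor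
      · intro h j hj
        rcases Finset.mem_union.1 (h hj) with h' | h'
        · exact h'
        · exact absurd hj (by simpa using hB h')
      · exact fun h => h.trans Finset.subset_union_left
    · intro A B hA hB
      have hZeq : Zα (A ∪ B) = Zα B := by
        simp only [hZα]
        refine Finset.sum_congr rfl fun β hβ => ?_
        have hdisj : α ∩ β = ∅ := by
          rw [Finset.mem_filter] at hβ
          exact Finset.not_nonempty_iff_eq_empty.1 hβ.2
        unfold iA
        refine if_congr ?_ rfl rfl
        constructor
        · intro h j hj
          rcases Finset.mem_union.1 (h hj) with h' | h'
          · exfalso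
            have : j ∈ α ∩ β := Finset.mem_inter.2 ⟨hA h', hj⟩
            rw [hdisj] at this
            exact absurd this (Finset.notMem_empty j)
          · exact h'
        · exact fun h => h.trans Finset.subset_union_right
      simp only [hg, hZeq]
  -- Z_α ≤ Y pointwise, so E e^{-tZ} ≥ E e^{-tY}
  have hgphi : ∑ S : Finset (Fin m), w S * Real.exp (-(t * YF S))
      ≤ ∑ S : Finset (Fin m), w S * g S := by
    refine Finset.sum_le_sum fun S _ => ?_
    refine mul_le_mul_of_nonneg_left ?_ (hw0 S)
    rw [hg]
    simp only
    rw [Real.exp_le_exp, neg_le_neg_iff]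
    refine mul_le_mul_of_nonneg_left ?_ ht
    rw [hYZ S]
    linarith [hYα0 S]
  set q : ℝ := ∑ S : Finset (Fin m), μt S with hq
  have hq0 : 0 ≤ q := Finset.sum_nonneg fun S _ => hμt0 S
  rcases hq0.eq_or_lt with hq1 | hq1
  · -- degenerate case: all conditional mass vanishes
    have hall : ∀ S ∈ (Finset.univ : Finset (Finset (Fin m))), μt S = 0 :=
      (Finset.sum_eq_zero_iff_of_nonneg fun S _ => hμt0 S).1 hq1.symm
    have e1 : ∑ S : Finset (Fin m), μt S * f S = 0 :=
      Finset.sum_eq_zero fun S hS => by rw [hall S hS, zero_mul]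
    have e2 : ∑ S : Finset (Fin m), μt S * Real.exp (-(t * YF S)) = 0 :=
      Finset.sum_eq_zero fun S hS => by rw [hall S hS, zero_mul]
    calc (∑ S : Finset (Fin m), μt S * f S)
          * (∑ S : Finset (Fin m), w S * Real.exp (-(t * YF S)))
        = 0 := by rw [e1, zero_mul]
      _ ≤ ∑ S : Finset (Fin m), μt S * Real.exp (-(t * YF S)) := by rw [e2]
  · -- main case
    have hμtg : ∑ S : Finset (Fin m), μt S * g S
        = q * ∑ S : Finset (Fin m), w S * g S := by
      rw [hq]
      rw [← hfactor]
      refine Finset.sum_congr rfl fun S _ => ?_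
      simp only [hμt]
      ring
    have hμtf0 : 0 ≤ ∑ S : Finset (Fin m), μt S * f S :=
      Finset.sum_nonneg fun S _ => mul_nonneg (hμt0 S) (Real.exp_nonneg _)
    have hfgsum : ∑ S : Finset (Fin m), μt S * (f S * g S)
        = ∑ S : Finset (Fin m), μt S * Real.exp (-(t * YF S)) :=
      Finset.sum_congr rfl fun S _ => hfg S
    rw [hfgsum, hμtg] at hfkg
    -- hfkg : (∑ μt f) * (q * ∑ w g) ≤ q * ∑ μt exp(-tYF)
    rw [← mul_le_mul_iff_right₀ hq1]
    calc q * ((∑ S : Finset (Fin m), μt S * f S)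
            * (∑ S : Finset (Fin m), w S * Real.exp (-(t * YF S))))
        = (∑ S : Finset (Fin m), μt S * f S)
            * (q * ∑ S : Finset (Fin m), w S * Real.exp (-(t * YF S))) := by ring
      _ ≤ (∑ S : Finset (Fin m), μt S * f S)
            * (q * ∑ S : Finset (Fin m), w S * g S) := by
          refine mul_le_mul_of_nonneg_left ?_ hμtf0
          exact mul_le_mul_of_nonneg_left hgphi hq0
      _ ≤ q * ∑ S : Finset (Fin m), μt S * Real.exp (-(t * YF S)) := hfkg

theorem janson_finite (p : Fin m → ℝ) (hp : ∀ j, 0 ≤ p j ∧ p j ≤ 1)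
    (𝒮 : Finset (Finset (Fin m))) (h𝒮 : ∀ α ∈ 𝒮, α.Nonempty)
    {μ Δ : ℝ}
    (hμ : μ = ∑ S : Finset (Fin m), wgt p Finset.univ S * ∑ α ∈ 𝒮, iA α S)
    (hΔ : Δ = ∑ α ∈ 𝒮, ∑ β ∈ 𝒮, if (α ∩ β).Nonempty then
        (∑ S : Finset (Fin m), wgt p Finset.univ S * (iA α S * iA β S)) else 0)
    (ε : ℝ) (hε : 0 < ε) :
    (∑ S : Finset (Fin m), wgt p Finset.univ S *
        (if (∑ α ∈ 𝒮, iA α S) ≤ (1 - ε) * μ then 1 else 0))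
      ≤ Real.exp (-(ε * μ) ^ 2 / (2 * (μ + Δ))) := by
  classical
  set w := wgt p Finset.univ with hw
  set YF : Finset (Fin m) → ℝ := fun S => ∑ α ∈ 𝒮, iA α S with hYF
  have hw0 : ∀ S, 0 ≤ w S := fun S => wgt_nonneg hp _ S
  have hw1 : ∑ S : Finset (Fin m), w S = 1 := sum_wgt_one p
  have hYF0 : ∀ S, 0 ≤ YF S := fun S => Finset.sum_nonneg fun α _ => iA_nonneg α S
  have hμ0 : 0 ≤ μ := by
    rw [hμ]
    exact Finset.sum_nonneg fun S _ => mul_nonneg (hw0 S) (hYF0 S)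
  -- the goal, reformulated
  suffices hgoal : (∑ S : Finset (Fin m), w S * (if YF S ≤ (1 - ε) * μ then 1 else 0))
      ≤ Real.exp (-(ε * μ) ^ 2 / (2 * (μ + Δ))) by simpa only [hYF] using hgoal
  rcases hμ0.eq_or_lt with hμz | hμpos
  · -- degenerate case μ = 0
    have hre : -(ε * μ) ^ 2 / (2 * (μ + Δ)) = 0 := by
      rw [← hμz]; simp
    rw [hre, Real.exp_zero]
    calc ∑ S : Finset (Fin m), w S * (if YF S ≤ (1 - ε) * μ then 1 else 0)
        ≤ ∑ S : Finset (Fin m), w S * 1 := by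
          refine Finset.sum_le_sum fun S _ => ?_
          refine mul_le_mul_of_nonneg_left ?_ (hw0 S)
          split <;> norm_num
      _ = 1 := by simp only [mul_one]; exact hw1
  · -- main case μ > 0
    -- Δ ≥ μ (diagonal terms)
    have hterm0 : ∀ α β : Finset (Fin m), 0 ≤ (if (α ∩ β).Nonempty then
        (∑ S : Finset (Fin m), w S * (iA α S * iA β S)) else 0) := by
      intro α β
      split
      · exact Finset.sum_nonneg fun S _ =>
          mul_nonneg (hw0 S) (mul_nonneg (iA_nonneg _ _) (iA_nonneg _ _))
      · exact le_refl 0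
    have hμswap : μ = ∑ α ∈ 𝒮, ∑ S : Finset (Fin m), w S * iA α S := by
      rw [hμ, Finset.sum_comm (s := Finset.univ) (t := 𝒮)
        (f := fun S α => w S * iA α S) |>.symm]
      exact Finset.sum_congr rfl fun S _ => by rw [Finset.mul_sum]
    have hΔμ : μ ≤ Δ := by
      rw [hΔ, hμswap]
      refine Finset.sum_le_sum fun α hα => ?_
      have hsingle := Finset.single_le_sum (f := fun β => if (α ∩ β).Nonempty then
          (∑ S : Finset (Fin m), w S * (iA α S * iA β S)) else 0)
        (fun β _ => hterm0 α β) hα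
      rw [if_pos (by simpa using h𝒮 α hα)] at hsingle
      refine le_trans (le_of_eq ?_) hsingle
      exact Finset.sum_congr rfl fun S _ => by rw [iA_sq]
    have hΔpos : 0 < Δ := lt_of_lt_of_le hμpos hΔμ
    set tst : ℝ := ε * μ / Δ with htst
    have htst0 : 0 ≤ tst := by positivity
    set φ : ℝ → ℝ := fun t => ∑ S : Finset (Fin m), w S * Real.exp (-(t * YF S)) with hφ
    have hφ0 : ∀ t, 0 ≤ φ t :=
      fun t => Finset.sum_nonneg fun S _ => mul_nonneg (hw0 S) (Real.exp_nonneg _)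
    have hφpos : ∀ t, 0 < φ t := by
      intro t
      simp only [hφ]
      obtain ⟨S₀, hS₀⟩ : ∃ S, 0 < w S := by
        by_contra hcon
        push_neg at hcon
        have : ∑ S : Finset (Fin m), w S = 0 :=
          Finset.sum_eq_zero fun S _ => le_antisymm (hcon S) (hw0 S)
        rw [hw1] at this
        norm_num at this
      have h2 : w S₀ * Real.exp (-(t * YF S₀))
          ≤ ∑ S : Finset (Fin m), w S * Real.exp (-(t * YF S)) :=
        Finset.single_le_sum (f := fun S => w S * Real.exp (-(t * YF S)))
          (fun S _ => mul_nonneg (hw0 S) (Real.exp_nonneg _)) (Finset.mem_univ S₀)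
      exact lt_of_lt_of_le (mul_pos hS₀ (Real.exp_pos _)) h2
    -- derivative of φ
    have hφd : ∀ t : ℝ, HasDerivAt φ
        (∑ S : Finset (Fin m), w S * (Real.exp (-(t * YF S)) * -YF S)) t := by
      intro t
      simp only [hφ]
      refine HasDerivAt.fun_sum fun S _ => ?_
      have h1 : HasDerivAt (fun t : ℝ => -(t * YF S)) (-YF S) t :=
        (hasDerivAt_mul_const (YF S)).neg
      exact (h1.exp).const_mul (w S)
    -- key differential inequality
    have hkey : ∀ t : ℝ, 0 ≤ t →
        μ * Real.exp (-(t * (Δ / μ))) * φ t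
          ≤ ∑ S : Finset (Fin m), w S * (YF S * Real.exp (-(t * YF S))) := by
      intro t ht
      have hswap : ∑ S : Finset (Fin m), w S * (YF S * Real.exp (-(t * YF S)))
          = ∑ α ∈ 𝒮, ∑ S : Finset (Fin m), (w S * iA α S) * Real.exp (-(t * YF S)) := by
        rw [← Finset.sum_comm]
        refine Finset.sum_congr rfl fun S _ => ?_
        simp only [hYF]
        rw [Finset.sum_mul, Finset.mul_sum]
        exact Finset.sum_congr rfl fun α _ => by ring
      have hstep : ∀ α ∈ 𝒮,
          (∑ S : Finset (Fin m), (w S * iA α S) *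
            Real.exp (-(t * ∑ β ∈ 𝒮.filter (fun β => (α ∩ β).Nonempty), iA β S))) * φ t
          ≤ ∑ S : Finset (Fin m), (w S * iA α S) * Real.exp (-(t * YF S)) :=
        fun α _ => stepA p hp t ht 𝒮 α
      -- Jensen step
      have hjen : μ * Real.exp (-(t * (Δ / μ)))
          ≤ ∑ α ∈ 𝒮, ∑ S : Finset (Fin m), (w S * iA α S) *
              Real.exp (-(t * ∑ β ∈ 𝒮.filter (fun β => (α ∩ β).Nonempty), iA β S)) := by
        have hjj := jensen_exp (𝒮 ×ˢ (Finset.univ : Finset (Finset (Fin m))))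
          (fun q => w q.2 * iA q.1 q.2)
          (fun q => -(t * ∑ β ∈ 𝒮.filter (fun β => (q.1 ∩ β).Nonempty), iA β q.2))
          (fun q _ => mul_nonneg (hw0 q.2) (iA_nonneg _ _)) ?_
        · have hv : ∑ q ∈ 𝒮 ×ˢ (Finset.univ : Finset (Finset (Fin m))), w q.2 * iA q.1 q.2
              = μ := by
            rw [Finset.sum_product, hμswap]
          have hvx : ∑ q ∈ 𝒮 ×ˢ (Finset.univ : Finset (Finset (Fin m))),
              (w q.2 * iA q.1 q.2) *
                (-(t * ∑ β ∈ 𝒮.filter (fun β => (q.1 ∩ β).Nonempty), iA β q.2))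
              = -(t * Δ) := by
            rw [Finset.sum_product]
            have hinner : ∀ α ∈ 𝒮, ∑ S : Finset (Fin m),
                (w S * iA α S) * (-(t * ∑ β ∈ 𝒮.filter (fun β => (α ∩ β).Nonempty), iA β S))
                = -(t * ∑ β ∈ 𝒮, if (α ∩ β).Nonempty then
                    (∑ S : Finset (Fin m), w S * (iA α S * iA β S)) else 0) := by
              intro α _
              have e1 : ∀ S : Finset (Fin m), (w S * iA α S) *
                  (-(t * ∑ β ∈ 𝒮.filter (fun β => (α ∩ β).Nonempty), iA β S))
                  = ∑ β ∈ 𝒮.filter (fun β => (α ∩ β).Nonempty),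
                      -(t * (w S * (iA α S * iA β S))) := by
                intro S
                rw [Finset.mul_sum, ← Finset.sum_neg_distrib, Finset.mul_sum]
                exact Finset.sum_congr rfl fun β _ => by ring
              rw [Finset.sum_congr rfl (fun S _ => e1 S)]
              rw [Finset.sum_comm]
              simp only [Finset.sum_neg_distrib, ← Finset.mul_sum]
              rw [Finset.sum_filter]
            rw [Finset.sum_congr rfl hinner, Finset.sum_neg_distrib, ← Finset.mul_sum, ← hΔ]
          rw [hv, hvx] at hjj
          have he : -(t * Δ) / μ = -(t * (Δ / μ)) := by
            field_simp
          rw [he] at hjj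
          refine le_trans hjj (le_of_eq ?_)
          rw [Finset.sum_product]
        · rw [Finset.sum_product, ← hμswap]
          exact hμpos
      calc μ * Real.exp (-(t * (Δ / μ))) * φ t
          ≤ (∑ α ∈ 𝒮, ∑ S : Finset (Fin m), (w S * iA α S) *
              Real.exp (-(t * ∑ β ∈ 𝒮.filter (fun β => (α ∩ β).Nonempty), iA β S))) * φ t :=
            mul_le_mul_of_nonneg_right hjen (hφ0 t)
        _ = ∑ α ∈ 𝒮, (∑ S : Finset (Fin m), (w S * iA α S) *
              Real.exp (-(t * ∑ β ∈ 𝒮.filter (fun β => (α ∩ β).Nonempty), iA β S))) * φ t := by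
            rw [Finset.sum_mul]
        _ ≤ ∑ α ∈ 𝒮, ∑ S : Finset (Fin m), (w S * iA α S) * Real.exp (-(t * YF S)) :=
            Finset.sum_le_sum hstep
        _ = ∑ S : Finset (Fin m), w S * (YF S * Real.exp (-(t * YF S))) := hswap.symm
    -- the auxiliary function H and its monotonicity
    set E : ℝ → ℝ :=
      fun t => Real.exp ((μ ^ 2 / Δ) * (1 - Real.exp (-(t * (Δ / μ))))) with hE
    have hEd : ∀ t : ℝ, HasDerivAt E
        (E t * ((μ ^ 2 / Δ) * (0 - Real.exp (-(t * (Δ / μ))) * -(Δ / μ)))) t := by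
      intro t
      simp only [hE]
      have a1 : HasDerivAt (fun t : ℝ => -(t * (Δ / μ))) (-(Δ / μ)) t :=
        (hasDerivAt_mul_const (Δ / μ)).neg
      have a2 := a1.exp
      have a3 := (hasDerivAt_const t (1 : ℝ)).sub a2
      have a4 := a3.const_mul (μ ^ 2 / Δ)
      exact a4.exp
    set H : ℝ → ℝ := fun t => φ t * E t with hHdef
    have hHd : ∀ t : ℝ, HasDerivAt H
        ((∑ S : Finset (Fin m), w S * (Real.exp (-(t * YF S)) * -YF S)) * E t
          + φ t * (E t * ((μ ^ 2 / Δ) * (0 - Real.exp (-(t * (Δ / μ))) * -(Δ / μ))))) t := by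
      intro t
      simp only [hHdef]
      exact (hφd t).mul (hEd t)
    have hHanti : AntitoneOn H (Set.Icc 0 tst) := by
      refine antitoneOn_of_deriv_nonpos (convex_Icc 0 tst) ?_ ?_ ?_
      · have : Differentiable ℝ H := fun t => (hHd t).differentiableAt
        exact this.continuous.continuousOn
      · intro t _
        exact (hHd t).differentiableAt.differentiableWithinAt
      · intro t htmem
        rw [interior_Icc] at htmem
        rw [(hHd t).deriv]
        have hkey' := hkey t htmem.1.le
        have hconst : (μ ^ 2 / Δ) * (0 - Real.exp (-(t * (Δ / μ))) * -(Δ / μ))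
            = μ * Real.exp (-(t * (Δ / μ))) := by
          field_simp
          ring
        rw [hconst]
        have h1 : ∑ S : Finset (Fin m), w S * (Real.exp (-(t * YF S)) * -YF S)
            = -(∑ S : Finset (Fin m), w S * (YF S * Real.exp (-(t * YF S)))) := by
          rw [← Finset.sum_neg_distrib]
          exact Finset.sum_congr rfl fun S _ => by ring
        rw [h1]
        have hEt0 : 0 ≤ E t := Real.exp_nonneg _
        calc -(∑ S : Finset (Fin m), w S * (YF S * Real.exp (-(t * YF S)))) * E t
              + φ t * (E t * (μ * Real.exp (-(t * (Δ / μ)))))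
            = E t * (μ * Real.exp (-(t * (Δ / μ))) * φ t
                - ∑ S : Finset (Fin m), w S * (YF S * Real.exp (-(t * YF S)))) := by ring
          _ ≤ 0 := mul_nonpos_of_nonneg_of_nonpos hEt0 (sub_nonpos.2 hkey')
    -- evaluate H at the endpoints
    have hH0 : H 0 = 1 := by
      simp only [hHdef, hφ, hE, zero_mul, neg_zero, Real.exp_zero, mul_one, sub_self,
        mul_zero]
      exact hw1
    have hHt : H tst ≤ 1 := by
      rw [← hH0]
      exact hHanti (Set.mem_Icc.2 ⟨le_refl 0, htst0⟩)
        (Set.mem_Icc.2 ⟨htst0, le_refl tst⟩) htst0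
    have htδ : tst * (Δ / μ) = ε := by
      rw [htst]
      field_simp
    have hφt : φ tst ≤ Real.exp (-((μ ^ 2 / Δ) * (1 - Real.exp (-ε)))) := by
      have hEt : E tst = Real.exp ((μ ^ 2 / Δ) * (1 - Real.exp (-ε))) := by
        simp only [hE]
        rw [show -(tst * (Δ / μ)) = -ε by rw [htδ]]
      have h2 : φ tst * Real.exp ((μ ^ 2 / Δ) * (1 - Real.exp (-ε))) ≤ 1 := by
        rw [← hEt]
        exact hHt
      have h3 : φ tst ≤ 1 / Real.exp ((μ ^ 2 / Δ) * (1 - Real.exp (-ε))) :=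
        (le_div_iff₀ (Real.exp_pos _)).2 h2
      rwa [Real.exp_neg, ← one_div]
    -- Chernoff bound
    have hcher : (∑ S : Finset (Fin m), w S * (if YF S ≤ (1 - ε) * μ then 1 else 0))
        ≤ Real.exp (tst * ((1 - ε) * μ)) * φ tst := by
      have hrhs : Real.exp (tst * ((1 - ε) * μ)) * φ tst
          = ∑ S : Finset (Fin m), w S *
              (Real.exp (tst * ((1 - ε) * μ)) * Real.exp (-(tst * YF S))) := by
        simp only [hφ]
        rw [Finset.mul_sum]
        exact Finset.sum_congr rfl fun S _ => by ring
      rw [hrhs]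
      refine Finset.sum_le_sum fun S _ => ?_
      refine mul_le_mul_of_nonneg_left ?_ (hw0 S)
      rw [← Real.exp_add]
      split
      · next h =>
          have h4 : 0 ≤ tst * ((1 - ε) * μ) + -(tst * YF S) := by
            rw [show tst * ((1 - ε) * μ) + -(tst * YF S)
                = tst * ((1 - ε) * μ - YF S) by ring]
            exact mul_nonneg htst0 (sub_nonneg.2 h)
          linarith [Real.add_one_le_exp (tst * ((1 - ε) * μ) + -(tst * YF S))]
      · exact Real.exp_nonneg _
    -- assemble everything
    have hq1 : ε - ε ^ 2 / 2 ≤ 1 - Real.exp (-ε) := by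
      have := exp_neg_le_quadratic hε.le
      linarith
    calc (∑ S : Finset (Fin m), w S * (if YF S ≤ (1 - ε) * μ then 1 else 0))
        ≤ Real.exp (tst * ((1 - ε) * μ)) * φ tst := hcher
      _ ≤ Real.exp (tst * ((1 - ε) * μ))
            * Real.exp (-((μ ^ 2 / Δ) * (1 - Real.exp (-ε)))) :=
          mul_le_mul_of_nonneg_left hφt (Real.exp_nonneg _)
      _ = Real.exp (tst * ((1 - ε) * μ) - (μ ^ 2 / Δ) * (1 - Real.exp (-ε))) := by
          rw [← Real.exp_add]
          congr 1
      _ ≤ Real.exp (tst * ((1 - ε) * μ) - (μ ^ 2 / Δ) * (ε - ε ^ 2 / 2)) := by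
          rw [Real.exp_le_exp]
          have hc0 : (0:ℝ) ≤ μ ^ 2 / Δ := by positivity
          have := mul_le_mul_of_nonneg_left hq1 hc0
          linarith
      _ = Real.exp (-(ε * μ) ^ 2 / (2 * Δ)) := by
          congr 1
          rw [htst]
          field_simp
          ring
      _ ≤ Real.exp (-(ε * μ) ^ 2 / (2 * (μ + Δ))) := by
          rw [Real.exp_le_exp, neg_div, neg_div, neg_le_neg_iff]
          exact div_le_div_of_nonneg_left (by positivity) (by positivity) (by linarith)

end JansonAux

open JansonAux

/-- Janson's inequality: if `z 1, …, z m` are independent `{0,1}`-valued random variables,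
`𝒮` is a finite family of nonempty index sets, `I α = ∏_{j ∈ α} z j`, `Y = ∑_{α ∈ 𝒮} I α`
and `Δ = ∑_{α ∩ β ≠ ∅} E[I α · I β]` (including the diagonal), then for any `ε > 0`,
`P(Y ≤ (1-ε)·E Y) ≤ exp(-(ε·E Y)² / (2·(E Y + Δ)))`. -/
theorem janson_inequality
    {Ω : Type*} [MeasureSpace Ω] [IsProbabilityMeasure (ℙ : Measure Ω)]
    {m : ℕ} (z : Fin m → Ω → ℝ)
    (hmeas : ∀ j, Measurable (z j))
    (hval : ∀ j, ∀ ω, z j ω = 0 ∨ z j ω = 1)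
    (hindep : iIndepFun z ℙ)
    (𝒮 : Finset (Finset (Fin m))) (h𝒮 : ∀ α ∈ 𝒮, α.Nonempty)
    (I : Finset (Fin m) → Ω → ℝ) (hI : ∀ α, I α = fun ω => ∏ j ∈ α, z j ω)
    (Y : Ω → ℝ) (hY : Y = fun ω => ∑ α ∈ 𝒮, I α ω)
    (Δ : ℝ)
    (hΔ : Δ = ∑ α ∈ 𝒮, ∑ β ∈ 𝒮, if (α ∩ β).Nonempty then (∫ ω, I α ω * I β ω) else 0)
    (ε : ℝ) (hε : 0 < ε) :
    (ℙ {ω | Y ω ≤ (1 - ε) * ∫ ω', Y ω'}).toReal ≤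
      Real.exp (-(ε * ∫ ω', Y ω') ^ 2 / (2 * ((∫ ω', Y ω') + Δ))) := by
  classical
  set p : Fin m → ℝ := fun j => (ℙ ((z j) ⁻¹' {1})).toReal with hpdef
  have hp : ∀ j, 0 ≤ p j ∧ p j ≤ 1 := by
    intro j
    refine ⟨ENNReal.toReal_nonneg, ?_⟩
    have h1 : ℙ ((z j) ⁻¹' {1}) ≤ 1 := prob_le_one
    have h2 : (ℙ ((z j) ⁻¹' {1})).toReal ≤ (1 : ENNReal).toReal :=
      ENNReal.toReal_mono ENNReal.one_ne_top h1
    simpa using h2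
  set sets : Ω → Finset (Fin m) := fun ω => Finset.univ.filter (fun j => z j ω = 1)
    with hsetsdef
  set A : Finset (Fin m) → Set Ω :=
    fun S => ⋂ j, (z j) ⁻¹' {if j ∈ S then (1 : ℝ) else 0} with hAdef
  have hAmeas : ∀ S, MeasurableSet (A S) :=
    fun S => MeasurableSet.iInter fun j => hmeas j (measurableSet_singleton _)
  have hmemA : ∀ (ω : Ω) (S : Finset (Fin m)),
      ω ∈ A S ↔ ∀ j, z j ω = (if j ∈ S then 1 else 0) := by
    intro ω S
    simp [hAdef, Set.mem_iInter]
  have hsets : ∀ ω, ω ∈ A (sets ω) := by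
    intro ω
    rw [hmemA]
    intro j
    rcases hval j ω with h | h
    · rw [if_neg, h]
      simp only [hsetsdef, Finset.mem_filter, Finset.mem_univ, true_and]
      rw [h]
      norm_num
    · rw [if_pos, h]
      simp only [hsetsdef, Finset.mem_filter, Finset.mem_univ, true_and]
      exact h
  have huniq : ∀ (ω : Ω) (S : Finset (Fin m)), ω ∈ A S → S = sets ω := by
    intro ω S hmem
    rw [hmemA] at hmem
    ext j
    simp only [hsetsdef, Finset.mem_filter, Finset.mem_univ, true_and]
    constructor
    · intro hj
      rw [hmem j, if_pos hj]
    · intro hj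
      by_contra hj'
      rw [hmem j, if_neg hj'] at hj
      norm_num at hj
  have hPA : ∀ S, (ℙ (A S)).toReal = wgt p Finset.univ S := by
    intro S
    have h1 : ℙ (A S) = ∏ j, ℙ ((z j) ⁻¹' {if j ∈ S then (1 : ℝ) else 0}) := by
      have h2 := hindep.measure_inter_preimage_eq_mul (S := Finset.univ)
        (sets := fun j => {if j ∈ S then (1 : ℝ) else 0})
        (fun j _ => measurableSet_singleton _)
      simpa [hAdef] using h2
    rw [h1, ENNReal.toReal_prod, wgt]
    refine Finset.prod_congr rfl fun j _ => ?_
    by_cases hj : j ∈ S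
    · rw [if_pos hj, if_pos hj]
    · rw [if_neg hj, if_neg hj]
      have hc : (z j) ⁻¹' {(0 : ℝ)} = ((z j) ⁻¹' {1})ᶜ := by
        ext ω
        simp only [Set.mem_preimage, Set.mem_singleton_iff, Set.mem_compl_iff]
        rcases hval j ω with h | h <;> simp [h]
      rw [hc, measure_compl (hmeas j (measurableSet_singleton _)) (measure_ne_top _ _),
        measure_univ, ENNReal.toReal_sub_of_le prob_le_one ENNReal.one_ne_top,
        ENNReal.toReal_one]
  -- transfer lemma : expectations become weighted sums over the hypercube
  have htrans : ∀ F : Finset (Fin m) → ℝ,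
      ∫ ω, F (sets ω) = ∑ S : Finset (Fin m), wgt p Finset.univ S * F S := by
    intro F
    have hfun : (fun ω => F (sets ω))
        = fun ω => ∑ S : Finset (Fin m), Set.indicator (A S) (fun _ => F S) ω := by
      funext ω
      symm
      rw [Fintype.sum_eq_single (sets ω)
        (fun S hS => Set.indicator_of_notMem (fun hmem => hS (huniq ω S hmem)) _)]
      exact Set.indicator_of_mem (hsets ω) _
    rw [hfun, MeasureTheory.integral_finset_sum _
      (fun S _ => (integrable_const (F S)).indicator (hAmeas S))]
    refine Finset.sum_congr rfl fun S _ => ?_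
    rw [MeasureTheory.integral_indicator_const (F S) (hAmeas S), smul_eq_mul, measureReal_def, hPA S]
  -- pointwise identification of the random variables
  have hIω : ∀ (α : Finset (Fin m)) (ω : Ω), I α ω = iA α (sets ω) := by
    intro α ω
    rw [hI α]
    simp only
    by_cases hsub : α ⊆ sets ω
    · rw [iA, if_pos hsub]
      refine Finset.prod_eq_one fun j hj => ?_
      have := hsub hj
      simp only [hsetsdef, Finset.mem_filter, Finset.mem_univ, true_and] at this
      exact this
    · rw [iA, if_neg hsub]
      obtain ⟨j, hjα, hjn⟩ := Finset.not_subset.1 hsub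
      have hz : z j ω = 0 := by
        rcases hval j ω with h | h
        · exact h
        · exfalso
          exact hjn (by simp [hsetsdef, h])
      exact Finset.prod_eq_zero hjα hz
  have hYω : ∀ ω, Y ω = ∑ α ∈ 𝒮, iA α (sets ω) := by
    intro ω
    rw [hY]
    simp only
    exact Finset.sum_congr rfl fun α _ => hIω α ω
  -- expectations
  have hEY : ∫ ω, Y ω
      = ∑ S : Finset (Fin m), wgt p Finset.univ S * ∑ α ∈ 𝒮, iA α S := by
    rw [← htrans (fun S => ∑ α ∈ 𝒮, iA α S)]
    exact integral_congr_ae (Filter.Eventually.of_forall fun ω => hYω ω)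
  have hEIαβ : ∀ α β : Finset (Fin m), ∫ ω, I α ω * I β ω
      = ∑ S : Finset (Fin m), wgt p Finset.univ S * (iA α S * iA β S) := by
    intro α β
    rw [← htrans (fun S => iA α S * iA β S)]
    refine integral_congr_ae (Filter.Eventually.of_forall fun ω => ?_)
    show I α ω * I β ω = iA α (sets ω) * iA β (sets ω)
    rw [hIω α ω, hIω β ω]
  -- probability of the lower-tail event
  have hYmeas : Measurable Y := by
    rw [hY]
    refine Finset.measurable_sum _ fun α _ => ?_
    rw [hI α]
    exact Finset.measurable_prod _ fun j _ => hmeas j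
  have hprob : (ℙ {ω | Y ω ≤ (1 - ε) * ∫ ω', Y ω'}).toReal
      = ∑ S : Finset (Fin m), wgt p Finset.univ S *
          (if (∑ α ∈ 𝒮, iA α S) ≤ (1 - ε) * ∫ ω', Y ω' then 1 else 0) := by
    have hE : MeasurableSet {ω | Y ω ≤ (1 - ε) * ∫ ω', Y ω'} :=
      hYmeas measurableSet_Iic
    rw [← measureReal_def, ← MeasureTheory.integral_indicator_one hE,
      ← htrans (fun S => if (∑ α ∈ 𝒮, iA α S) ≤ (1 - ε) * ∫ ω', Y ω' then 1 else 0)]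
    refine integral_congr_ae (Filter.Eventually.of_forall fun ω => ?_)
    show Set.indicator {ω | Y ω ≤ (1 - ε) * ∫ ω', Y ω'} 1 ω
        = (if (∑ α ∈ 𝒮, iA α (sets ω)) ≤ (1 - ε) * ∫ ω', Y ω' then (1 : ℝ) else 0)
    by_cases hc : Y ω ≤ (1 - ε) * ∫ ω', Y ω'
    · rw [Set.indicator_of_mem (show ω ∈ {ω | Y ω ≤ (1 - ε) * ∫ ω', Y ω'} from hc),
        if_pos (by rw [← hYω ω]; exact hc)]
      rfl
    · rw [Set.indicator_of_notMem
        (show ω ∉ {ω | Y ω ≤ (1 - ε) * ∫ ω', Y ω'} from hc),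
        if_neg (by rw [← hYω ω]; exact hc)]
  -- apply the finite Janson inequality
  have hΔ' : Δ = ∑ α ∈ 𝒮, ∑ β ∈ 𝒮, if (α ∩ β).Nonempty then
      (∑ S : Finset (Fin m), wgt p Finset.univ S * (iA α S * iA β S)) else 0 := by
    rw [hΔ]
    refine Finset.sum_congr rfl fun α _ => Finset.sum_congr rfl fun β _ => ?_
    by_cases h : (α ∩ β).Nonempty
    · rw [if_pos h, if_pos h, hEIαβ α β]
    · rw [if_neg h, if_neg h]
  rw [hprob]
  exact janson_finite p hp 𝒮 h𝒮 hEY hΔ' ε hε
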